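/- Let K be a field with a valuation v : K → ℤₘ₀. Let d ∈ K satisfy v d = 1 and suppose that the residue of d is not a square in the residue field of the valuation ring of v. Then for all a, b ∈ K, the value v(a² − d·b²) is a square in ℤₘ₀; that is, there exists c ∈ ℤₘ₀ with v(a² − d·b²) = c·c (equivalently, the additive valuation of a² − d·b² is even or infinite). -/

import Mathlib

local notation "ℤₘ₀" => WithZero (Multiplicative ℤ)

private lemma zm0_sq_eq_one {u : ℤₘ₀} (hu : u ≠ 0) (h : u * u = 1) : u = 1 := by
  obtain ⟨x, rfl⟩ := WithZero.ne_zero_iff_exists.mp hu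
  rw [← WithZero.coe_mul, ← WithZero.coe_one, WithZero.coe_inj] at h
  have hx : Multiplicative.toAdd x + Multiplicative.toAdd x = 0 := by
    simpa [← toAdd_mul] using congrArg Multiplicative.toAdd h
  have : Multiplicative.toAdd x = 0 := by omega
  rw [← WithZero.coe_one, WithZero.coe_inj]
  exact Multiplicative.toAdd.injective (by simpa using this)

/-- Over a field `K` with a `ℤₘ₀`-valued valuation `v`, if `d` is a unit of the valuation
ring (`v d = 1`) whose residue is not a square in the residue field, then every norm
`a² - d·b²` from the quadratic extension `K(√d)` has square (i.e. even or infinite)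
valuation: `v (a² - d·b²) = c·c` for some `c : ℤₘ₀`. -/
theorem valuation_norm_sq_sub_mul_sq
    (K : Type*) [Field K] (v : Valuation K ℤₘ₀) (d : K)
    (hd : v d = 1)
    (hd_res : ¬ IsSquare (IsLocalRing.residue v.valuationSubring
      ⟨d, (Valuation.mem_valuationSubring_iff v d).mpr hd.le⟩)) :
    ∀ a b : K, ∃ c : ℤₘ₀, v (a ^ 2 - d * b ^ 2) = c * c := by
  have hI : v.Integers v.valuationSubring := Valuation.integer.integers v
  intro a b
  by_cases hb : b = 0
  · exact ⟨v a, by simp [hb, sq, v.map_mul]⟩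
  rcases eq_or_ne (v (a ^ 2)) (v (d * b ^ 2)) with heq | hne
  · -- equal valuations: reduce to t = a/b with v t = 1
    have hvb : v b ≠ 0 := v.ne_zero_iff.mpr hb
    set t : K := a / b with ht
    have hvb2 : v (b ^ 2) ≠ 0 := by simp [pow_ne_zero, hb, v.ne_zero_iff]
    have hvt2 : v (t ^ 2) = 1 := by
      rw [ht, div_pow, map_div₀, heq, v.map_mul, hd, one_mul, div_self hvb2]
    have hvt : v t = 1 := zm0_sq_eq_one (fun h0 => by simp [h0] at hvt2)
      (by rw [← hvt2, sq, v.map_mul])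
    have htm : t ∈ v.valuationSubring := hvt.le
    -- v (t^2 - d) = 1
    have hle : v (t ^ 2 - d) ≤ 1 := v.map_sub_le hvt2.le hd.le
    have hone : v (t ^ 2 - d) = 1 := by
      rcases hle.lt_or_eq with hlt | h
      · exfalso
        apply hd_res
        set T : v.valuationSubring := ⟨t, htm⟩
        set D : v.valuationSubring := ⟨d, (Valuation.mem_valuationSubring_iff v d).mpr hd.le⟩
        have hmem : T ^ 2 - D ∈ IsLocalRing.maximalIdeal v.valuationSubring := by
          rw [IsLocalRing.mem_maximalIdeal, mem_nonunits_iff,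
            hI.isUnit_iff_valuation_eq_one]
          have : (algebraMap v.valuationSubring K) (T ^ 2 - D) = t ^ 2 - d := rfl
          rw [this]
          exact hlt.ne
        have h0 : IsLocalRing.residue v.valuationSubring (T ^ 2 - D) = 0 :=
          (IsLocalRing.residue_eq_zero_iff _).mpr hmem
        rw [map_sub, map_pow, sub_eq_zero] at h0
        exact ⟨_, by rw [← h0, sq]⟩
      · exact h
    refine ⟨v b, ?_⟩
    have hfactor : a ^ 2 - d * b ^ 2 = b ^ 2 * (t ^ 2 - d) := by
      field_simp [ht]
      have h2 : b ^ 2 * t ^ 2 = a ^ 2 := by rw [ht, ← mul_pow, mul_div_assoc', mul_div_cancel_left₀ a hb]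
      linear_combination (-1 : K) * h2
    rw [hfactor, v.map_mul, hone, mul_one, sq, v.map_mul]
  · rcases hne.lt_or_gt with h | h
    · exact ⟨v b, by rw [v.map_sub_eq_of_lt_right h, v.map_mul, hd, one_mul, sq, v.map_mul]⟩
    · exact ⟨v a, by rw [v.map_sub_eq_of_lt_left h, sq, v.map_mul]⟩
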